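/- arXiv:2512.17502 — 2 statements merged into one kernel-verified Lean document; each statement's English description precedes it below -/
import Mathlib

section
/- With K the reproducing kernel of an admissible vector u (so that V is an isometry H → L²(G)), the kernel satisfies the convolution idempotence K ∗ K = K in L²(G). -/
open MeasureTheory Complex

private lemma voice_integrable {G : Type*} [MeasurableSpace G]
    {μ : Measure G}
    {H : Type*} [NormedAddCommGroup H] [InnerProductSpace ℂ H]
    {U : G → H →L[ℂ] H} {u : H}
    (hadmissible : ∀ v : H, ∫ x, ‖(inner ℂ (U x u) v : ℂ)‖ ^ 2 ∂μ = ‖v‖ ^ 2)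
    (v : H) : Integrable (fun y => ‖(inner ℂ (U y u) v : ℂ)‖ ^ 2) μ := by
  by_cases hv : v = 0
  · subst hv; simp [inner_zero_right]
  · by_contra h
    have h0 := hadmissible v
    rw [integral_undef h] at h0
    have : ‖v‖ = 0 := by nlinarith [norm_nonneg v]
    exact hv (norm_eq_zero.mp this)

private lemma voice_isometry {G : Type*} [MeasurableSpace G]
    {μ : Measure G}
    {H : Type*} [NormedAddCommGroup H] [InnerProductSpace ℂ H]
    {U : G → H →L[ℂ] H} {u : H}
    (hadmissible : ∀ v : H, ∫ x, ‖(inner ℂ (U x u) v : ℂ)‖ ^ 2 ∂μ = ‖v‖ ^ 2)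
    (v w : H) :
    ∫ y, (starRingEnd ℂ) (inner ℂ (U y u) v : ℂ) * (inner ℂ (U y u) w : ℂ) ∂μ
      = (inner ℂ v w : ℂ) := by
  have hpt : ∀ y : G, (starRingEnd ℂ) (inner ℂ (U y u) v : ℂ) * (inner ℂ (U y u) w : ℂ)
      = ((‖(inner ℂ (U y u) (v + w) : ℂ)‖ : ℂ) ^ 2 - (‖(inner ℂ (U y u) (v - w) : ℂ)‖ : ℂ) ^ 2 +
          ((‖(inner ℂ (U y u) (v - I • w) : ℂ)‖ : ℂ) ^ 2
            - (‖(inner ℂ (U y u) (v + I • w) : ℂ)‖ : ℂ) ^ 2) * I) / 4 := by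
    intro y
    have := inner_eq_sum_norm_sq_div_four (𝕜 := ℂ)
      ((inner ℂ (U y u) v : ℂ)) ((inner ℂ (U y u) w : ℂ))
    rw [RCLike.inner_apply] at this
    rw [mul_comm] at this
    simpa [inner_add_right, inner_sub_right, inner_smul_right, RCLike.I,
      smul_eq_mul] using this
  rw [integral_congr_ae (Filter.Eventually.of_forall hpt)]
  have hI := fun v => (voice_integrable hadmissible v)
  have hIc : ∀ v : H, Integrable (fun y => ((‖(inner ℂ (U y u) v : ℂ)‖ : ℂ)) ^ 2) μ := by
    intro v
    have := ((hI v).ofReal (𝕜 := ℂ))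
    simpa using this
  rw [integral_div]
  have hsub1 : Integrable (fun y =>
      ((‖(inner ℂ (U y u) (v + w) : ℂ)‖ : ℂ)) ^ 2 - ((‖(inner ℂ (U y u) (v - w) : ℂ)‖ : ℂ)) ^ 2) μ :=
    (hIc (v + w)).sub (hIc (v - w))
  have hsub2 : Integrable (fun y =>
      (((‖(inner ℂ (U y u) (v - I • w) : ℂ)‖ : ℂ)) ^ 2
        - ((‖(inner ℂ (U y u) (v + I • w) : ℂ)‖ : ℂ)) ^ 2) * I) μ :=
    ((hIc (v - I • w)).sub (hIc (v + I • w))).mul_const I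
  rw [integral_add hsub1 hsub2]
  rw [integral_sub (hIc (v+w)) (hIc (v-w)), integral_mul_const,
    integral_sub (hIc (v - I • w)) (hIc (v + I • w))]
  have hre : ∀ v : H, ∫ y, ((‖(inner ℂ (U y u) v : ℂ)‖ : ℂ)) ^ 2 ∂μ = ((‖v‖ : ℂ)) ^ 2 := by
    intro v
    have : (fun y => ((‖(inner ℂ (U y u) v : ℂ)‖ : ℂ)) ^ 2)
        = fun y => ((‖(inner ℂ (U y u) v : ℂ)‖ ^ 2 : ℝ) : ℂ) := by
      funext y; push_cast; ring
    rw [this]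
    have h2 : (∫ y, ((‖(inner ℂ (U y u) v : ℂ)‖ ^ 2 : ℝ) : ℂ) ∂μ)
        = ((∫ y, ‖(inner ℂ (U y u) v : ℂ)‖ ^ 2 ∂μ : ℝ) : ℂ) := integral_ofReal
    rw [h2, hadmissible v]; push_cast; ring
  rw [hre (v+w), hre (v-w), hre (v - I • w), hre (v + I • w)]
  have := inner_eq_sum_norm_sq_div_four (𝕜 := ℂ) v w
  simpa [RCLike.I] using this.symm

/-- The reproducing kernel `K = Vu` of an admissible vector `u` (so that the voice transform
`Vv(x) = ⟨v, U(x)u⟩` is an isometry `H → L²(G)`) satisfies the convolution idempotence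
`K ∗ K = K`. -/
theorem kernel_convolution_idempotent {G : Type*} [Group G] [TopologicalSpace G]
    [IsTopologicalGroup G] [LocallyCompactSpace G] [SecondCountableTopology G]
    [MeasurableSpace G] [BorelSpace G]
    (μ : Measure G) [μ.IsHaarMeasure]
    {H : Type*} [NormedAddCommGroup H] [InnerProductSpace ℂ H]
    (U : G → H →L[ℂ] H)
    (hone : U 1 = ContinuousLinearMap.id ℂ H)
    (hmul : ∀ x y, U (x * y) = (U x).comp (U y))
    (hunitary : ∀ x v v', inner ℂ (U x v) (U x v') = (inner ℂ v v' : ℂ))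
    (u : H)
    (hadmissible : ∀ v : H, ∫ x, ‖(inner ℂ (U x u) v : ℂ)‖ ^ 2 ∂μ = ‖v‖ ^ 2)
    (K : G → ℂ) (hK : ∀ x, K x = (inner ℂ (U x u) u : ℂ)) :
    ∀ x, ∫ y, K y * K (y⁻¹ * x) ∂μ = K x := by
  intro x
  have hpt : ∀ y : G, K y * K (y⁻¹ * x)
      = (starRingEnd ℂ) ((starRingEnd ℂ) (inner ℂ (U y u) u : ℂ) * (inner ℂ (U y u) (U x u) : ℂ)) := by
    intro y
    have h1 : (inner ℂ (U (y⁻¹ * x) u) u : ℂ) = (inner ℂ (U x u) (U y u) : ℂ) := by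
      have := hunitary y (U (y⁻¹ * x) u) u
      rw [← this]
      congr 1
      have : U y (U (y⁻¹ * x) u) = U (y * (y⁻¹ * x)) u := by
        rw [hmul y (y⁻¹ * x)]; rfl
      rw [this]; congr 1; group
    rw [hK, hK, h1, map_mul, RCLike.conj_conj, inner_conj_symm]
  rw [integral_congr_ae (Filter.Eventually.of_forall hpt), integral_conj,
    voice_isometry hadmissible u (U x u), inner_conj_symm, hK]
end

section
/- For the Paley–Wiener space B²_Ω with Ω = [-ω, ω] and the translation representation π(b)v = v(·−b) of (ℝ,+): a vector ψ ∈ B²_Ω is admissible (i.e. v ↦ ⟨v, π(·)ψ⟩ is an isometry B²_Ω → L²(ℝ)) if and only if |ψ̂(ξ)| = 1 for almost every ξ ∈ Ω. -/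
open MeasureTheory Complex Real Set

lemma norm_char (x : ℝ) : ‖Complex.exp ((x : ℂ) * I)‖ = 1 := by
  rw [Complex.norm_exp_ofReal_mul_I]

lemma norm_char' (b ξ : ℝ) : ‖Complex.exp (2 * π * I * b * ξ)‖ = 1 := by
  have : (2 * π * I * b * ξ : ℂ) = ((2 * π * b * ξ : ℝ) : ℂ) * I := by push_cast; ring
  rw [this, norm_char]

lemma H_integrable {ω : ℝ} (hω : 0 < ω) {H : ℝ → ℂ} (hm : Measurable H)
    (hsupp : ∀ ξ, ξ ∉ Icc (-ω) ω → H ξ = 0) (hL2 : MemLp H 2 volume) :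
    Integrable H volume := by
  have hind : H = (Icc (-ω) ω).indicator H := by
    ext ξ
    by_cases h : ξ ∈ Icc (-ω) ω
    · simp [indicator_of_mem h]
    · simp [indicator_of_notMem h, hsupp ξ h]
  rw [hind, integrable_indicator_iff measurableSet_Icc]
  haveI : IsFiniteMeasure (volume.restrict (Icc (-ω) ω)) := by
    constructor
    rw [Measure.restrict_apply_univ]
    exact measure_Icc_lt_top
  exact (hL2.restrict _).integrable one_le_two

lemma F_continuous {ω : ℝ} (hω : 0 < ω) {H : ℝ → ℂ} (hm : Measurable H)
    (hInt : Integrable H volume) :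
    Continuous (fun b : ℝ => ∫ ξ : ℝ, H ξ * Complex.exp (2 * π * I * b * ξ)) := by
  apply continuous_of_dominated (bound := fun ξ => ‖H ξ‖)
  · intro b
    exact (hm.mul (by fun_prop)).aestronglyMeasurable
  · intro b
    filter_upwards with ξ
    rw [norm_mul, norm_char', mul_one]
  · exact hInt.norm
  · filter_upwards with ξ
    fun_prop

lemma parseval_step {ω : ℝ} (hω : 0 < ω) {H : ℝ → ℂ} (hm : Measurable H)
    (hsupp : ∀ ξ, ξ ∉ Icc (-ω) ω → H ξ = 0) (hL2 : MemLp H 2 volume) (s : ℝ) :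
    Summable (fun n : ℤ =>
      ‖∫ ξ : ℝ, H ξ * Complex.exp (2 * π * I * (s - (n : ℝ) * (2 * ω + 1)⁻¹) * ξ)‖ ^ 2)
    ∧ ∑' n : ℤ, ‖∫ ξ : ℝ, H ξ * Complex.exp (2 * π * I * (s - (n : ℝ) * (2 * ω + 1)⁻¹) * ξ)‖ ^ 2
      = (2 * ω + 1) * ∫ ξ : ℝ, ‖H ξ‖ ^ 2 := by
  set T : ℝ := 2 * ω + 1 with hTdef
  have hT : 0 < T := by simp only [hTdef]; linarith
  haveI : Fact (0 < T) := ⟨hT⟩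
  set a : ℝ := -ω - 1 with hadef
  have hab : a < a + T := by simp only [hadef, hTdef]; linarith
  have hIccIoc : Icc (-ω) ω ⊆ Ioc a (a + T) := by
    intro x hx
    simp only [hadef, hTdef] at *
    constructor <;> [linarith [hx.1]; linarith [hx.2]]
  set Hs : ℝ → ℂ := fun ξ => H ξ * Complex.exp (2 * π * I * s * ξ) with hHsdef
  have hHsm : Measurable Hs := hm.mul (by fun_prop)
  have hHs_norm : ∀ ξ, ‖Hs ξ‖ = ‖H ξ‖ := by
    intro ξ
    rw [hHsdef]
    simp only [norm_mul, norm_char' s ξ, mul_one]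
  have hHs_supp : ∀ ξ, ξ ∉ Ioc a (a + T) → Hs ξ = 0 := by
    intro ξ hξ
    have : H ξ = 0 := hsupp ξ (fun hmem => hξ (hIccIoc hmem))
    rw [hHsdef]; simp [this]
  have hHsL2 : MemLp Hs 2 volume :=
    hL2.of_le hHsm.aestronglyMeasurable (ae_of_all _ fun ξ => le_of_eq (hHs_norm ξ))
  set fs : AddCircle T → ℂ := AddCircle.liftIoc T a Hs with hfsdef
  have hfs_eq : ∀ x ∈ Ioc a (a + T), fs (x : AddCircle T) = Hs x := fun x hx =>
    AddCircle.liftIoc_coe_apply hx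
  have hfs_meas : Measurable fs := by
    have : fs = Hs ∘ (fun y : Ioc a (a + T) => (y : ℝ)) ∘ (AddCircle.measurableEquivIoc T a) := rfl
    rw [this]
    exact hHsm.comp (measurable_subtype_coe.comp (AddCircle.measurableEquivIoc T a).measurable)
  have hfsL2vol : MemLp fs 2 (volume : Measure (AddCircle T)) := by
    refine ⟨hfs_meas.aestronglyMeasurable, ?_⟩
    have h1 : eLpNorm fs 2 (volume : Measure (AddCircle T))
        = eLpNorm (fs ∘ ((↑) : ℝ → AddCircle T)) 2 (volume.restrict (Ioc a (a + T))) := by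
      rw [← (AddCircle.measurePreserving_mk T a).map_eq]
      exact eLpNorm_map_measure
        (by rw [(AddCircle.measurePreserving_mk T a).map_eq]; exact hfs_meas.aestronglyMeasurable)
        (AddCircle.measurable_mk').aemeasurable
    have h2 : eLpNorm (fs ∘ ((↑) : ℝ → AddCircle T)) 2 (volume.restrict (Ioc a (a + T)))
        = eLpNorm Hs 2 (volume.restrict (Ioc a (a + T))) := by
      refine eLpNorm_congr_ae ?_
      rw [Filter.EventuallyEq, ae_restrict_iff' measurableSet_Ioc]
      filter_upwards with x hx
      exact hfs_eq x hx
    rw [h1, h2]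
    exact lt_of_le_of_lt (eLpNorm_mono_measure _ Measure.restrict_le_self) hHsL2.2
  have hHaar : (AddCircle.haarAddCircle : Measure (AddCircle T))
      = (ENNReal.ofReal T)⁻¹ • (volume : Measure (AddCircle T)) := by
    rw [AddCircle.volume_eq_smul_haarAddCircle, smul_smul,
      ENNReal.inv_mul_cancel (by simp [hT]) ENNReal.ofReal_ne_top, one_smul]
  have hfsL2 : MemLp fs 2 (AddCircle.haarAddCircle : Measure (AddCircle T)) := by
    rw [hHaar]
    exact hfsL2vol.smul_measure (by simp [hT])
  set fLp : Lp ℂ 2 (AddCircle.haarAddCircle : Measure (AddCircle T)) := hfsL2.toLp fs with hfLpdef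
  have hcoeff_congr : ∀ n : ℤ, fourierCoeff (⇑fLp) n = fourierCoeff fs n := by
    intro n
    refine integral_congr_ae ?_
    filter_upwards [hfsL2.coeFn_toLp] with t ht
    rw [ht]
  have hcoeff : ∀ n : ℤ, fourierCoeff fs n
      = (T⁻¹ : ℝ) • ∫ ξ : ℝ, H ξ * Complex.exp (2 * π * I * (s - (n : ℝ) * T⁻¹) * ξ) := by
    intro n
    rw [hfsdef, fourierCoeff_liftIoc_eq, fourierCoeffOn_eq_integral _ _ hab,
      intervalIntegral.integral_of_le hab.le]
    have hptw : ∀ x : ℝ, (fourier (-n) (x : AddCircle (a + T - a))) • Hs x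
        = H x * Complex.exp (2 * π * I * (s - (n : ℝ) * T⁻¹) * x) := by
      intro x
      rw [fourier_coe_apply, smul_eq_mul, hHsdef]
      simp only []
      rw [mul_comm, mul_assoc, ← Complex.exp_add]
      congr 2
      push_cast
      ring
    have hset : ∫ x in Ioc a (a + T), (fourier (-n) (x : AddCircle (a + T - a))) • Hs x
        = ∫ x : ℝ, (fourier (-n) (x : AddCircle (a + T - a))) • Hs x :=
      setIntegral_eq_integral_of_forall_compl_eq_zero
        (fun x hx => by rw [hHs_supp x hx, smul_zero])
    rw [hset, show (1 : ℝ) / (a + T - a) = T⁻¹ by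
      rw [show a + T - a = T by ring]; exact one_div T]
    congr 1
    exact integral_congr_ae (Filter.Eventually.of_forall fun x => hptw x)
  have parseval := tsum_sq_fourierCoeff fLp
  have hcoeff2 : ∀ n : ℤ, ‖fourierCoeff (⇑fLp) n‖ ^ 2
      = T⁻¹ ^ 2 * ‖∫ ξ : ℝ, H ξ * Complex.exp (2 * π * I * (s - (n : ℝ) * T⁻¹) * ξ)‖ ^ 2 := by
    intro n
    rw [hcoeff_congr n, hcoeff n, norm_smul, Real.norm_eq_abs, abs_of_pos (inv_pos.2 hT), mul_pow]
  have hRHS : ∫ t : AddCircle T, ‖fLp t‖ ^ 2 ∂AddCircle.haarAddCircle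
      = T⁻¹ * ∫ ξ : ℝ, ‖H ξ‖ ^ 2 := by
    have h1 : ∫ t : AddCircle T, ‖fLp t‖ ^ 2 ∂AddCircle.haarAddCircle
        = ∫ t : AddCircle T, ‖fs t‖ ^ 2 ∂AddCircle.haarAddCircle := by
      refine integral_congr_ae ?_
      filter_upwards [hfsL2.coeFn_toLp] with t ht
      rw [ht]
    have h2 : ∫ t : AddCircle T, ‖fs t‖ ^ 2 ∂(volume : Measure (AddCircle T))
        = ∫ ξ : ℝ, ‖H ξ‖ ^ 2 := by
      rw [← AddCircle.integral_preimage T a (fun t => ‖fs t‖ ^ 2)]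
      rw [setIntegral_congr_fun measurableSet_Ioc
        (fun x hx => by rw [hfs_eq x hx, hHs_norm])]
      exact setIntegral_eq_integral_of_forall_compl_eq_zero
        (fun x hx => by rw [hsupp x (fun hmem => hx (hIccIoc hmem))]; simp)
    rw [h1, hHaar, integral_smul_measure, h2, ENNReal.toReal_inv,
      ENNReal.toReal_ofReal hT.le, smul_eq_mul]
  have hsum0 : Summable (fun n : ℤ => ‖fourierCoeff (⇑fLp) n‖ ^ 2) := by
    have h := lp.memℓp (fourierBasis.repr fLp)
    rw [memℓp_gen_iff (by norm_num : 0 < (2 : ENNReal).toReal)] at h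
    refine h.congr fun n => ?_
    rw [fourierBasis_repr]
    norm_num
  have hsumF : Summable (fun n : ℤ =>
      ‖∫ ξ : ℝ, H ξ * Complex.exp (2 * π * I * (s - (n : ℝ) * T⁻¹) * ξ)‖ ^ 2) := by
    refine (hsum0.mul_left (T ^ 2)).congr fun n => ?_
    rw [hcoeff2 n]
    field_simp
  refine ⟨hsumF, ?_⟩
  calc ∑' n : ℤ, ‖∫ ξ : ℝ, H ξ * Complex.exp (2 * π * I * (s - (n : ℝ) * T⁻¹) * ξ)‖ ^ 2
      = ∑' n : ℤ, T ^ 2 * ‖fourierCoeff (⇑fLp) n‖ ^ 2 := by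
        refine tsum_congr fun n => ?_
        rw [hcoeff2 n]
        field_simp
    _ = T ^ 2 * ∑' n : ℤ, ‖fourierCoeff (⇑fLp) n‖ ^ 2 := tsum_mul_left
    _ = T ^ 2 * (T⁻¹ * ∫ ξ : ℝ, ‖H ξ‖ ^ 2) := by rw [parseval, hRHS]
    _ = T * ∫ ξ : ℝ, ‖H ξ‖ ^ 2 := by
        field_simp

lemma plancherel_compact {ω : ℝ} (hω : 0 < ω) {H : ℝ → ℂ} (hm : Measurable H)
    (hsupp : ∀ ξ, ξ ∉ Icc (-ω) ω → H ξ = 0) (hL2 : MemLp H 2 volume) :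
    ∫ b : ℝ, ‖∫ ξ : ℝ, H ξ * Complex.exp (2 * π * I * b * ξ)‖ ^ 2
      = ∫ ξ : ℝ, ‖H ξ‖ ^ 2 := by
  set T : ℝ := 2 * ω + 1 with hTdef
  have hT : 0 < T := by simp only [hTdef]; linarith
  set c : ℝ := T⁻¹ with hcdef
  have hc : 0 < c := inv_pos.2 hT
  set F : ℝ → ℂ := fun b => ∫ ξ : ℝ, H ξ * Complex.exp (2 * π * I * b * ξ) with hFdef
  have hInt := H_integrable hω hm hsupp hL2
  have hFc : Continuous F := F_continuous hω hm hInt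
  have hnnH : 0 ≤ ∫ ξ : ℝ, ‖H ξ‖ ^ 2 := integral_nonneg fun ξ => sq_nonneg _
  have key : ∀ s : ℝ, ∑' n : ℤ, ENNReal.ofReal (‖F (s - (n : ℝ) * c)‖ ^ 2)
      = ENNReal.ofReal (T * ∫ ξ : ℝ, ‖H ξ‖ ^ 2) := by
    intro s
    obtain ⟨hsum, htsum⟩ := parseval_step hω hm hsupp hL2 s
    rw [← hTdef] at hsum htsum
    rw [← htsum, ENNReal.ofReal_tsum_of_nonneg (fun n => sq_nonneg _) hsum]
    refine tsum_congr fun n => ?_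
    have harg : F (s - (n : ℝ) * c)
        = ∫ ξ : ℝ, H ξ * Complex.exp (2 * π * I * ((s : ℂ) - ((n : ℝ) : ℂ) * ((T⁻¹ : ℝ) : ℂ)) * ξ) := by
      simp only [hFdef]
      refine integral_congr_ae (Filter.Eventually.of_forall fun ξ => ?_)
      rw [hcdef]
      push_cast [Complex.ofReal_inv]
      ring_nf
    rw [harg]
  have hmeasF2 : Measurable fun b : ℝ => ENNReal.ofReal (‖F b‖ ^ 2) :=
    ((hFc.norm.pow 2).measurable).ennreal_ofReal
  let e : ℤ ≃ AddSubgroup.zmultiples c :=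
    Equiv.ofBijective (fun n : ℤ => ⟨n • c, AddSubgroup.zsmul_mem_zmultiples c n⟩)
      ⟨fun m n hmn => (zsmul_left_strictMono hc).injective (congrArg Subtype.val hmn),
       fun g => by
        obtain ⟨n, hn⟩ := AddSubgroup.mem_zmultiples_iff.mp g.2
        exact ⟨n, Subtype.ext hn⟩⟩
  have hFD := isAddFundamentalDomain_Ioc hc 0 (volume : Measure ℝ)
  have hvadd : ∀ (g : AddSubgroup.zmultiples c) (x : ℝ), (g +ᵥ x : ℝ) = (g : ℝ) + x :=
    fun g x => rfl
  have hunfold : ∫⁻ b : ℝ, ENNReal.ofReal (‖F b‖ ^ 2)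
      = ENNReal.ofReal (∫ ξ : ℝ, ‖H ξ‖ ^ 2) := by
    have hmeas_g : ∀ g : AddSubgroup.zmultiples c,
        AEMeasurable (fun x : ℝ => ENNReal.ofReal (‖F (g +ᵥ x)‖ ^ 2))
          (volume.restrict (Ioc (0:ℝ) (0 + c))) := by
      intro g
      have hco : Measurable fun x : ℝ => (g +ᵥ x : ℝ) := by
        simp only [hvadd]
        exact measurable_id.const_add _
      exact (hmeasF2.comp hco).aemeasurable
    rw [hFD.lintegral_eq_tsum'' (fun b => ENNReal.ofReal (‖F b‖ ^ 2)),
      ← lintegral_tsum hmeas_g]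
    have hptw : ∀ x : ℝ, ∑' g : AddSubgroup.zmultiples c,
        ENNReal.ofReal (‖F (g +ᵥ x)‖ ^ 2)
        = ENNReal.ofReal (T * ∫ ξ : ℝ, ‖H ξ‖ ^ 2) := by
      intro x
      calc ∑' g : AddSubgroup.zmultiples c, ENNReal.ofReal (‖F (g +ᵥ x)‖ ^ 2)
          = ∑' n : ℤ, ENNReal.ofReal (‖F ((n : ℤ) • c + x)‖ ^ 2) :=
            (e.tsum_eq (fun g : AddSubgroup.zmultiples c =>
              ENNReal.ofReal (‖F (g +ᵥ x)‖ ^ 2))).symm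
        _ = ∑' n : ℤ, ENNReal.ofReal (‖F ((-n : ℤ) • c + x)‖ ^ 2) :=
            ((Equiv.neg ℤ).tsum_eq (fun n : ℤ =>
              ENNReal.ofReal (‖F ((n : ℤ) • c + x)‖ ^ 2))).symm
        _ = ∑' n : ℤ, ENNReal.ofReal (‖F (x - (n : ℝ) * c)‖ ^ 2) := by
            refine tsum_congr fun n => ?_
            congr 3
            rw [zsmul_eq_mul]
            push_cast
            ring
        _ = ENNReal.ofReal (T * ∫ ξ : ℝ, ‖H ξ‖ ^ 2) := key x
    calc ∫⁻ x in Ioc (0:ℝ) (0 + c), ∑' g : AddSubgroup.zmultiples c,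
          ENNReal.ofReal (‖F (g +ᵥ x)‖ ^ 2)
        = ∫⁻ _ in Ioc (0:ℝ) (0 + c), ENNReal.ofReal (T * ∫ ξ : ℝ, ‖H ξ‖ ^ 2) :=
          setLIntegral_congr_fun measurableSet_Ioc (fun x _ => hptw x)
      _ = ENNReal.ofReal (T * ∫ ξ : ℝ, ‖H ξ‖ ^ 2) * volume (Ioc (0:ℝ) (0 + c)) :=
          setLIntegral_const _ _
      _ = ENNReal.ofReal (∫ ξ : ℝ, ‖H ξ‖ ^ 2) := by
          rw [Real.volume_Ioc, ← ENNReal.ofReal_mul (by positivity)]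
          congr 1
          rw [hcdef]
          field_simp
          ring
  have hFmeas2 : AEStronglyMeasurable (fun b : ℝ => ‖F b‖ ^ 2) volume :=
    (hFc.norm.pow 2).aestronglyMeasurable
  have hInt2 : Integrable (fun b : ℝ => ‖F b‖ ^ 2) volume := by
    refine ⟨hFmeas2, ?_⟩
    rw [hasFiniteIntegral_iff_ofReal (ae_of_all _ fun b => sq_nonneg _), hunfold]
    exact ENNReal.ofReal_lt_top
  rw [integral_eq_lintegral_of_nonneg_ae (ae_of_all _ fun b => sq_nonneg _) hFmeas2, hunfold,
    ENNReal.toReal_ofReal hnnH]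

lemma null_of_setIntegral {P : Set ℝ} (hP : MeasurableSet P) (hfin : volume P ≠ ⊤)
    {φ : ℝ → ℝ} (hφint : IntegrableOn φ P volume)
    (heq : ∫ ξ in P, φ ξ = (volume P).toReal) (hlt : ∀ ξ ∈ P, φ ξ < 1) :
    volume P = 0 := by
  have hconst : IntegrableOn (fun _ : ℝ => (1 : ℝ)) P volume :=
    integrableOn_const hfin
  have h1 : ∫ ξ in P, ((1 : ℝ) - φ ξ) = 0 := by
    rw [integral_sub hconst hφint, heq, setIntegral_const]
    simp [Measure.real]
  have hsub : Integrable (fun ξ : ℝ => (1 : ℝ) - φ ξ) (volume.restrict P) :=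
    hconst.sub hφint
  have h2 : ∀ᵐ ξ ∂(volume.restrict P), (1 : ℝ) - φ ξ = 0 := by
    refine (integral_eq_zero_iff_of_nonneg_ae ?_ hsub).mp h1
    rw [Filter.EventuallyLE, ae_restrict_iff' hP]
    filter_upwards with ξ hξ
    simp only [Pi.zero_apply]
    linarith [hlt ξ hξ]
  have h3 := (ae_restrict_iff' hP).mp h2
  rw [measure_eq_zero_iff_ae_notMem]
  filter_upwards [h3] with ξ hξ hmem
  linarith [hlt ξ hmem, hξ hmem]

/-- Admissibility in the Paley–Wiener space `B²_Ω`, `Ω = [-ω, ω]`, for the translation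
representation of `(ℝ,+)`: a vector `ψ ∈ B²_Ω` is admissible (the voice transform
`v ↦ ⟨v, π(·)ψ⟩` is an isometry into `L²(ℝ)`) iff `|ψ̂| = 1` a.e. on `Ω`.
By Plancherel this is stated on the frequency side: `g = ψ̂` is supported in `Ω` and
square-integrable, and for `v ∈ B²_Ω` with `v̂ = h` the voice transform is
`Vv(b) = ∫_Ω h(ξ) conj(g(ξ)) e^{2πibξ} dξ`. -/
theorem paley_wiener_admissible_iff (ω : ℝ) (hω : 0 < ω)
    (g : ℝ → ℂ) (hg_meas : Measurable g)
    (hg_supp : ∀ ξ, ξ ∉ Icc (-ω) ω → g ξ = 0)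
    (hg_L2 : MemLp g 2 volume) :
    (∀ h : ℝ → ℂ, Measurable h → (∀ ξ, ξ ∉ Icc (-ω) ω → h ξ = 0) → MemLp h 2 volume →
      ∫ b : ℝ, ‖∫ ξ : ℝ, h ξ * (starRingEnd ℂ) (g ξ) *
          Complex.exp (2 * π * I * b * ξ)‖ ^ 2 = ∫ ξ : ℝ, ‖h ξ‖ ^ 2) ↔
    (∀ᵐ ξ : ℝ, ξ ∈ Icc (-ω) ω → ‖g ξ‖ = 1) := by
  have hg_star : Measurable fun ξ => (starRingEnd ℂ) (g ξ) := continuous_star.measurable.comp hg_meas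
  constructor
  · intro hiso
    have hg2meas : Measurable fun ξ : ℝ => ‖g ξ‖ ^ 2 := (hg_meas.norm.pow_const 2)
    have hIntg2 : Integrable (fun ξ : ℝ => ‖g ξ‖ ^ 2) volume := by
      have h2 := hg_L2.integrable_norm_rpow (by norm_num) (by norm_num)
      refine h2.congr (ae_of_all _ fun ξ => ?_)
      show ‖g ξ‖ ^ ((2 : ENNReal).toReal) = ‖g ξ‖ ^ 2
      rw [show ((2 : ENNReal).toReal) = ((2 : ℕ) : ℝ) by norm_num, Real.rpow_natCast]
    have hkey : ∀ S : Set ℝ, MeasurableSet S → S ⊆ Icc (-ω) ω →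
        ∫ ξ in S, ‖g ξ‖ ^ 2 = (volume S).toReal := by
      intro S hS hSsub
      have hSfin : volume S < ⊤ := lt_of_le_of_lt (measure_mono hSsub) measure_Icc_lt_top
      have hhm : Measurable (S.indicator fun _ : ℝ => (1 : ℂ)) := measurable_const.indicator hS
      have hhsupp : ∀ ξ, ξ ∉ Icc (-ω) ω → S.indicator (fun _ : ℝ => (1 : ℂ)) ξ = 0 :=
        fun ξ hξ => indicator_of_notMem (fun hmem => hξ (hSsub hmem)) _
      have hhL2 : MemLp (S.indicator fun _ : ℝ => (1 : ℂ)) 2 volume :=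
        memLp_indicator_const 2 hS 1 (Or.inr hSfin.ne)
      have hiso' := hiso _ hhm hhsupp hhL2
      have hHm : Measurable fun ξ =>
          S.indicator (fun _ : ℝ => (1 : ℂ)) ξ * (starRingEnd ℂ) (g ξ) := hhm.mul hg_star
      have hHsupp : ∀ ξ, ξ ∉ Icc (-ω) ω →
          S.indicator (fun _ : ℝ => (1 : ℂ)) ξ * (starRingEnd ℂ) (g ξ) = 0 := by
        intro ξ hξ
        rw [hhsupp ξ hξ, zero_mul]
      have hHL2 : MemLp (fun ξ =>
          S.indicator (fun _ : ℝ => (1 : ℂ)) ξ * (starRingEnd ℂ) (g ξ)) 2 volume := by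
        refine hg_L2.of_le hHm.aestronglyMeasurable (ae_of_all _ fun ξ => ?_)
        rw [norm_mul, RCLike.norm_conj]
        by_cases hmem : ξ ∈ S
        · simp only [indicator_of_mem hmem, norm_one, one_mul, le_refl]
        · simp only [indicator_of_notMem hmem, norm_zero, zero_mul]
          exact norm_nonneg _
      have hplan := plancherel_compact hω hHm hHsupp hHL2
      rw [hplan] at hiso'
      have hRHS : ∫ ξ : ℝ, ‖S.indicator (fun _ : ℝ => (1 : ℂ)) ξ‖ ^ 2 = (volume S).toReal := by
        have hptw : ∀ ξ, ‖S.indicator (fun _ : ℝ => (1 : ℂ)) ξ‖ ^ 2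
            = S.indicator (fun _ : ℝ => (1 : ℝ)) ξ := by
          intro ξ
          by_cases hmem : ξ ∈ S
          · simp only [indicator_of_mem hmem]
            simp
          · simp only [indicator_of_notMem hmem]
            simp
        simp_rw [hptw]
        rw [integral_indicator hS, setIntegral_const, smul_eq_mul, mul_one]
        rfl
      rw [hRHS] at hiso'
      rw [← hiso', ← integral_indicator hS]
      refine integral_congr_ae (Filter.Eventually.of_forall fun ξ => ?_)
      by_cases hmem : ξ ∈ S
      · simp only [indicator_of_mem hmem]
        simp [norm_mul, RCLike.norm_conj]
      · simp only [indicator_of_notMem hmem]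
        simp
    -- the two exceptional sets
    have hAmeas : MeasurableSet (Icc (-ω) ω ∩ {ξ : ℝ | ‖g ξ‖ ^ 2 < 1}) :=
      measurableSet_Icc.inter (measurableSet_lt hg2meas measurable_const)
    have hBmeas : MeasurableSet (Icc (-ω) ω ∩ {ξ : ℝ | 1 < ‖g ξ‖ ^ 2}) :=
      measurableSet_Icc.inter (measurableSet_lt measurable_const hg2meas)
    have hAfin : volume (Icc (-ω) ω ∩ {ξ : ℝ | ‖g ξ‖ ^ 2 < 1}) ≠ ⊤ :=
      (lt_of_le_of_lt (measure_mono inter_subset_left) measure_Icc_lt_top).ne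
    have hBfin : volume (Icc (-ω) ω ∩ {ξ : ℝ | 1 < ‖g ξ‖ ^ 2}) ≠ ⊤ :=
      (lt_of_le_of_lt (measure_mono inter_subset_left) measure_Icc_lt_top).ne
    have hA0 : volume (Icc (-ω) ω ∩ {ξ : ℝ | ‖g ξ‖ ^ 2 < 1}) = 0 := by
      refine null_of_setIntegral hAmeas hAfin hIntg2.integrableOn
        (hkey _ hAmeas inter_subset_left) (fun ξ hξ => hξ.2)
    have hB0 : volume (Icc (-ω) ω ∩ {ξ : ℝ | 1 < ‖g ξ‖ ^ 2}) = 0 := by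
      have hc2 : IntegrableOn (fun _ : ℝ => (2 : ℝ))
          (Icc (-ω) ω ∩ {ξ : ℝ | 1 < ‖g ξ‖ ^ 2}) volume :=
        integrableOn_const hBfin
      have hsub2 : IntegrableOn (fun ξ : ℝ => 2 - ‖g ξ‖ ^ 2)
          (Icc (-ω) ω ∩ {ξ : ℝ | 1 < ‖g ξ‖ ^ 2}) volume := hc2.sub hIntg2.integrableOn
      refine null_of_setIntegral (φ := fun ξ : ℝ => 2 - ‖g ξ‖ ^ 2) hBmeas hBfin hsub2 ?_
        (fun ξ hξ => by have := hξ.2; simp only [mem_setOf_eq] at this; show 2 - ‖g ξ‖ ^ 2 < 1; linarith)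
      rw [integral_sub hc2 hIntg2.integrableOn,
        hkey _ hBmeas inter_subset_left, setIntegral_const, smul_eq_mul]
      simp only [Measure.real]
      ring
    have hAae := measure_eq_zero_iff_ae_notMem.mp hA0
    have hBae := measure_eq_zero_iff_ae_notMem.mp hB0
    filter_upwards [hAae, hBae] with ξ hA hB hmem
    have h1 : ¬ (‖g ξ‖ ^ 2 < 1) := fun hlt => hA ⟨hmem, hlt⟩
    have h2 : ¬ (1 < ‖g ξ‖ ^ 2) := fun hlt => hB ⟨hmem, hlt⟩
    have h3 : ‖g ξ‖ ^ 2 = 1 := le_antisymm (not_lt.mp h2) (not_lt.mp h1)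
    have h4 : (‖g ξ‖ - 1) * (‖g ξ‖ + 1) = 0 := by nlinarith
    rcases mul_eq_zero.mp h4 with h5 | h5
    · linarith
    · nlinarith [norm_nonneg (g ξ)]
  · intro hg1 h hm hsupp hL2
    have hHm : Measurable fun ξ => h ξ * (starRingEnd ℂ) (g ξ) := hm.mul hg_star
    have hHsupp : ∀ ξ, ξ ∉ Icc (-ω) ω → h ξ * (starRingEnd ℂ) (g ξ) = 0 := by
      intro ξ hξ
      rw [hsupp ξ hξ, zero_mul]
    have hHle : ∀ᵐ ξ : ℝ, ‖h ξ * (starRingEnd ℂ) (g ξ)‖ = ‖h ξ‖ := by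
      filter_upwards [hg1] with ξ hξ
      by_cases hmem : ξ ∈ Icc (-ω) ω
      · rw [norm_mul, RCLike.norm_conj, hξ hmem, mul_one]
      · rw [hsupp ξ hmem]
        simp
    have hHL2 : MemLp (fun ξ => h ξ * (starRingEnd ℂ) (g ξ)) 2 volume :=
      hL2.of_le hHm.aestronglyMeasurable (hHle.mono fun ξ hξ => le_of_eq hξ)
    rw [plancherel_compact hω hHm hHsupp hHL2]
    refine integral_congr_ae ?_
    filter_upwards [hHle] with ξ hξ
    rw [hξ]
end
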